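/- Let n, k ≥ 1 and f : 𝔽_{2^n} → ℤ/2^kℤ. Then f is nega-ℤ_{2^k}-bent (i.e., |K_f(c,u)| = 2^{n/2} for all u ∈ 𝔽_{2^n} and all nonzero c ∈ ℤ/2^kℤ) if and only if for every nonzero z ∈ 𝔽_{2^n} the function y ↦ f(y+z) − f(y) + 2^{k−1}·ι(Tr(zy)) from 𝔽_{2^n} to ℤ/2^kℤ is balanced. -/

import Mathlib

noncomputable section

/-- The absolute trace Tr(x) = x + x² + x⁴ + … + x^{2^{n−1}}. -/
def Tr {F : Type} [Field F] (n : ℕ) (x : F) : F :=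
  ∑ i ∈ Finset.range n, x ^ (2 ^ i)

/-- σ(c,x) = Σ_{0 ≤ i < j ≤ n−1} (cx)^{2^i} (cx)^{2^j} -/
def sig {F : Type} [Field F] (n : ℕ) (c x : F) : F :=
  ∑ j ∈ Finset.range n, ∑ i ∈ Finset.range j, (c * x) ^ (2 ^ i) * (c * x) ^ (2 ^ j)

/-- ι(e): the integer lift of e ∈ {0,1} ⊆ F. -/
def iotaN {F : Type} [Field F] [DecidableEq F] (e : F) : ℕ :=
  if e = 1 then 1 else 0

/-- ι(e) viewed in ℤ/2^kℤ. -/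
def iotaZ {F : Type} [Field F] [DecidableEq F] (k : ℕ) (e : F) : ZMod (2 ^ k) :=
  if e = 1 then 1 else 0

/-- ζ = e^{2πi/2^k}. -/
def zeta (k : ℕ) : ℂ := Complex.exp (2 * Real.pi * Complex.I / 2 ^ k)

/-- c₀ ∈ {0,1} ⊆ F equals 1 if c is odd and 0 if c is even. -/
def czero {F : Type} [Field F] (k : ℕ) (c : ZMod (2 ^ k)) : F :=
  if c.val % 2 = 1 then 1 else 0

/-- The nega-ℤ_{2^k}-Hadamard transform
K_f(c,u) = Σ_{x ∈ F} (−1)^{ι(Tr(ux)) + ι(σ(c₀,x))} ζ^{c·f(x)} i^{ι(Tr(c₀x))}. -/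
def negaK {F : Type} [Field F] [Fintype F] [DecidableEq F] (n k : ℕ)
    (f : F → ZMod (2 ^ k)) (c : ZMod (2 ^ k)) (u : F) : ℂ :=
  ∑ x : F, (-1 : ℂ) ^ (iotaN (Tr n (u * x)) + iotaN (sig n (czero k c) x)) *
    zeta k ^ (c * f x).val * Complex.I ^ (iotaN (Tr n (czero k c * x)))

/-- g : F → ℤ/2^kℤ is balanced if every value is attained exactly 2^n/2^k times. -/
def IsBalancedFn {F : Type} [Fintype F] [DecidableEq F] (n k : ℕ)
    (g : F → ZMod (2 ^ k)) : Prop :=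
  ∀ w : ZMod (2 ^ k),
    2 ^ k * (Finset.univ.filter fun y : F => g y = w).card = 2 ^ n



set_option linter.unusedSectionVars false

section AuxA
variable {F : Type} [Field F] [Fintype F] [DecidableEq F]

lemma charF {n : ℕ} (hF : Fintype.card F = 2 ^ n) : CharP F 2 := by
  haveI := ringChar.charP F
  obtain ⟨m, hp, hc⟩ := FiniteField.card F (ringChar F)
  have h2 : ringChar F = 2 := by
    have hd : ringChar F ∣ 2 ^ n := by
      rw [← hF, hc]; exact dvd_pow_self _ (by exact_mod_cast m.ne_zero)
    have := hp.dvd_of_dvd_pow hd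
    exact (Nat.prime_dvd_prime_iff_eq hp Nat.prime_two).mp this
  rw [← h2]; exact ringChar.charP F

variable {n : ℕ} (hF : Fintype.card F = 2 ^ n)

include hF

lemma pow_card_self (x : F) : x ^ (2 ^ n) = x := by
  rw [← hF]; exact FiniteField.pow_card x

lemma F_add_self (x : F) : x + x = 0 := by
  haveI := charF hF
  exact CharTwo.add_self_eq_zero x

lemma Tr_add (x y : F) : Tr n (x + y) = Tr n x + Tr n y := by
  haveI := charF hF
  haveI : Fact (Nat.Prime 2) := ⟨Nat.prime_two⟩
  simp only [Tr, ← Finset.sum_add_distrib]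
  exact Finset.sum_congr rfl fun i _ => add_pow_char_pow x y 2 i

omit [Fintype F] [DecidableEq F] hF in
lemma Tr_zero : Tr n (0 : F) = 0 := by
  simp [Tr, zero_pow (pow_ne_zero _ two_ne_zero)]

lemma Tr_mem (x : F) : Tr n x = 0 ∨ Tr n x = 1 := by
  haveI := charF hF
  haveI : Fact (Nat.Prime 2) := ⟨Nat.prime_two⟩
  have hsq : (Tr n x) ^ 2 = Tr n x := by
    have h1 : (Tr n x) ^ 2 = ∑ i ∈ Finset.range n, x ^ (2 ^ (i + 1)) := by
      rw [Tr, sum_pow_char]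
      exact Finset.sum_congr rfl fun i _ => by rw [← pow_mul, ← pow_succ]
    have h2 : (Tr n x) ^ 2 + x ^ (2 ^ 0) = Tr n x + x ^ (2 ^ n) := by
      rw [h1, ← Finset.sum_range_succ' (fun i => x ^ (2 ^ i)) n]
      rw [Finset.sum_range_succ]; ring_nf; rw [Tr]
    rw [pow_card_self hF] at h2
    norm_num at h2
    exact h2
  rcases mul_eq_zero.mp (show Tr n x * (Tr n x - 1) = 0 by ring_nf; rw [hsq]; ring) with h | h
  · exact Or.inl h
  · exact Or.inr (sub_eq_zero.mp h)

end AuxA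

section AuxB
variable {F : Type} [Field F] [Fintype F] [DecidableEq F]
variable {n : ℕ} (hF : Fintype.card F = 2 ^ n) (hn : 1 ≤ n)



include hF hn

lemma Tr_exists_one : ∃ a : F, Tr n a = 1 := by
  by_contra h
  push_neg at h
  have hall : ∀ x : F, Tr n x = 0 := fun x => (Tr_mem hF x).resolve_right (h x)
  set p : Polynomial F := ∑ i ∈ Finset.range n, Polynomial.X ^ (2 ^ i) with hp
  have hdeg : p.natDegree ≤ 2 ^ (n - 1) := by
    apply Polynomial.natDegree_sum_le_of_forall_le
    intro i hi
    calc (Polynomial.X ^ (2^i) : Polynomial F).natDegree ≤ 2 ^ i := by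
          simp [Polynomial.natDegree_X_pow]
      _ ≤ 2 ^ (n-1) := Nat.pow_le_pow_right (by norm_num)
          (Nat.le_sub_one_of_lt (Finset.mem_range.mp hi))
  have hpne : p ≠ 0 := by
    intro h0
    have : p.coeff (2 ^ (n - 1)) = 1 := by
      rw [hp, Polynomial.finset_sum_coeff]
      rw [Finset.sum_eq_single (n - 1)]
      · simp [Polynomial.coeff_X_pow]
      · intro i hi hne
        have : 2 ^ i ≠ 2 ^ (n-1) := fun hc =>
          hne (Nat.pow_right_injective (le_refl 2) hc)
        simp only [Polynomial.coeff_X_pow, if_neg (fun hc : 2^(n-1) = 2^i => this hc.symm)]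
      · intro hmem
        exact absurd (Finset.mem_range.mpr (by omega)) hmem
    rw [h0] at this
    simp at this
  have hroots : (Finset.univ : Finset F) ⊆ p.roots.toFinset := by
    intro a _
    rw [Multiset.mem_toFinset, Polynomial.mem_roots hpne]
    show p.eval a = 0
    rw [hp]
    simpa [Polynomial.eval_finset_sum, Tr] using hall a
  have hcard : (2:ℕ) ^ n ≤ 2 ^ (n-1) := by
    calc (2:ℕ)^n = (Finset.univ : Finset F).card := hF.symm
      _ ≤ p.roots.toFinset.card := Finset.card_le_card hroots
      _ ≤ Multiset.card p.roots := Multiset.toFinset_card_le _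
      _ ≤ p.natDegree := Polynomial.card_roots' p
      _ ≤ 2 ^ (n-1) := hdeg
  have : (2:ℕ) ^ (n-1) < 2 ^ n := Nat.pow_lt_pow_right (by norm_num) (by omega)
  omega

lemma char_sum_F {z : F} (hz : z ≠ 0) :
    ∑ u : F, (-1 : ℂ) ^ (iotaN (Tr n (u * z))) = 0 := by
  obtain ⟨a, ha⟩ := Tr_exists_one hF hn
  set u₀ : F := a * z⁻¹ with hu0
  have hu0z : Tr n (u₀ * z) = 1 := by
    rw [hu0, mul_assoc, inv_mul_cancel₀ hz, mul_one, ha]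
  have key : ∀ u : F, (-1 : ℂ) ^ (iotaN (Tr n ((u + u₀) * z)))
      = - (-1 : ℂ) ^ (iotaN (Tr n (u * z))) := by
    intro u
    have : Tr n ((u + u₀) * z) = Tr n (u * z) + 1 := by
      rw [add_mul, Tr_add hF, hu0z]
    rw [this]
    rcases Tr_mem hF (u * z) with h | h <;> rw [h]
    · norm_num [iotaN]
    · rw [F_add_self hF 1]
      norm_num [iotaN]
  have h1 : ∑ u : F, (-1 : ℂ) ^ (iotaN (Tr n ((u + u₀) * z)))
      = ∑ u : F, (-1 : ℂ) ^ (iotaN (Tr n (u * z))) :=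
    Fintype.sum_equiv (Equiv.addRight u₀) _ _ (fun u => rfl)
  have h2 : ∑ u : F, (-1 : ℂ) ^ (iotaN (Tr n ((u + u₀) * z)))
      = - ∑ u : F, (-1 : ℂ) ^ (iotaN (Tr n (u * z))) := by
    rw [← Finset.sum_neg_distrib]
    exact Finset.sum_congr rfl fun u _ => key u
  set S := ∑ u : F, (-1 : ℂ) ^ (iotaN (Tr n (u * z))) with hS
  have h3 : (2:ℂ) * S = 0 := by
    have : S = -S := h1.symm.trans h2
    linear_combination this
  exact (mul_eq_zero.mp h3).resolve_left two_ne_zero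
end AuxB

section AuxC
variable (k : ℕ)

lemma zeta_eq : zeta k = Complex.exp (2 * (Real.pi : ℂ) * Complex.I / ((2 ^ k : ℕ) : ℂ)) := by
  rw [zeta]; congr 1; push_cast; ring

lemma zeta_prim : IsPrimitiveRoot (zeta k) (2 ^ k) := by
  rw [zeta_eq]
  exact Complex.isPrimitiveRoot_exp (2 ^ k) (by positivity)

lemma zeta_ne_zero : zeta k ≠ 0 := by rw [zeta]; exact Complex.exp_ne_zero _

lemma zeta_pow_card : zeta k ^ (2 ^ k) = 1 := (zeta_prim k).pow_eq_one

lemma zeta_pow_mod (m : ℕ) : zeta k ^ (m % 2 ^ k) = zeta k ^ m := by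
  conv_rhs => rw [← Nat.div_add_mod m (2 ^ k)]
  rw [pow_add, pow_mul, zeta_pow_card, one_pow, one_mul]

lemma zeta_abs : ‖zeta k‖ = 1 := by
  have h : ‖zeta k‖ ^ (2 ^ k) = 1 := by
    rw [← norm_pow, zeta_pow_card, norm_one]
  have h' : |‖zeta k‖ ^ (2 ^ k)| = 1 := by rw [h]; exact abs_one
  have := (abs_pow_eq_one _ (show (2:ℕ)^k ≠ 0 by positivity)).mp h'
  rwa [abs_of_nonneg (norm_nonneg (zeta k))] at this

lemma zeta_pow_half (hk : 1 ≤ k) : zeta k ^ (2 ^ (k - 1)) = -1 := by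
  rw [zeta_eq k, ← Complex.exp_nat_mul, ← Complex.exp_pi_mul_I]
  congr 1
  have h2 : (2:ℂ) ^ k = 2 ^ (k-1) * 2 := by
    rw [← pow_succ]; congr 1; omega
  have h3 : (2:ℂ) ^ (k-1) ≠ 0 := pow_ne_zero _ two_ne_zero
  push_cast [h2]
  field_simp

/-- The additive character m ↦ ζ^{m.val} on ℤ/2^kℤ. -/
def Zc (m : ZMod (2 ^ k)) : ℂ := zeta k ^ m.val

lemma NeZero_pow : NeZero (2 ^ k) := ⟨by positivity⟩

lemma Zc_add (a b : ZMod (2 ^ k)) : Zc k (a + b) = Zc k a * Zc k b := by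
  haveI := NeZero_pow k
  rw [Zc, Zc, Zc, ZMod.val_add, zeta_pow_mod, pow_add]

lemma Zc_zero : Zc k 0 = 1 := by
  haveI := NeZero_pow k
  rw [Zc, ZMod.val_zero, pow_zero]

lemma Zc_ne_zero (a : ZMod (2 ^ k)) : Zc k a ≠ 0 :=
  pow_ne_zero _ (zeta_ne_zero k)

lemma Zc_neg (a : ZMod (2 ^ k)) : Zc k (-a) = (Zc k a)⁻¹ :=
  eq_inv_of_mul_eq_one_left (by rw [mul_comm, ← Zc_add, add_neg_cancel, Zc_zero])

lemma Zc_conj (a : ZMod (2 ^ k)) : (starRingEnd ℂ) (Zc k a) = Zc k (-a) := by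
  rw [Zc_neg, Zc, map_pow, ← Complex.inv_eq_conj (zeta_abs k), inv_pow]

lemma Zc_abs (a : ZMod (2 ^ k)) : ‖Zc k a‖ = 1 := by
  rw [Zc, norm_pow, zeta_abs, one_pow]

lemma zmod_char_sum {a : ZMod (2 ^ k)} (ha : a ≠ 0) :
    ∑ c : ZMod (2 ^ k), Zc k (c * a) = 0 := by
  haveI := NeZero_pow k
  have hterm : ∀ c : ZMod (2 ^ k), Zc k (c * a) = (zeta k ^ a.val) ^ c.val := by
    intro c
    rw [Zc, ZMod.val_mul, zeta_pow_mod, mul_comm c.val a.val, pow_mul]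
  have hne : zeta k ^ a.val ≠ 1 := by
    intro h
    have hd := ((zeta_prim k).pow_eq_one_iff_dvd a.val).mp h
    have hv : a.val = 0 := Nat.eq_zero_of_dvd_of_lt hd (ZMod.val_lt a)
    exact ha ((ZMod.val_eq_zero a).mp hv)
  have hpow : (zeta k ^ a.val) ^ (2 ^ k) = 1 := by
    rw [← pow_mul, mul_comm a.val (2^k), pow_mul, zeta_pow_card, one_pow]
  calc ∑ c : ZMod (2 ^ k), Zc k (c * a)
      = ∑ j ∈ Finset.range (2 ^ k), (zeta k ^ a.val) ^ j := by
        apply Finset.sum_nbij' (fun c : ZMod (2^k) => c.val)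
          (fun j => ((j : ℕ) : ZMod (2^k)))
        · intro c _; exact Finset.mem_range.mpr (ZMod.val_lt c)
        · intro j _; exact Finset.mem_univ _
        · intro c _; exact ZMod.natCast_val c |>.trans (ZMod.cast_id _ _)
        · intro j hj; exact ZMod.val_cast_of_lt (Finset.mem_range.mp hj)
        · intro c _; exact hterm c
    _ = 0 := by rw [geom_sum_eq hne, hpow, sub_self, zero_div]

lemma zmod_card : Fintype.card (ZMod (2 ^ k)) = 2 ^ k := by
  haveI := NeZero_pow k
  exact ZMod.card _

end AuxC

section AuxD
variable {F : Type} [Field F] [Fintype F] [DecidableEq F] {n k : ℕ}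

lemma zmod_char_sum_ite (a : ZMod (2 ^ k)) :
    ∑ c : ZMod (2 ^ k), Zc k (c * a) = if a = 0 then ((2:ℂ) ^ k) else 0 := by
  haveI := NeZero_pow k
  split_ifs with h
  · subst h
    simp only [mul_zero, Zc_zero, Finset.sum_const, Finset.card_univ, zmod_card,
      nsmul_eq_mul, mul_one]
    push_cast
    ring
  · exact zmod_char_sum k h

lemma sum_Zc_fiberwise (g : F → ZMod (2 ^ k)) (c : ZMod (2 ^ k)) :
    ∑ x : F, Zc k (c * g x) =
      ∑ w : ZMod (2 ^ k),
        ((Finset.univ.filter fun y : F => g y = w).card : ℂ) * Zc k (c * w) := by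
  haveI := NeZero_pow k
  rw [← Finset.sum_fiberwise Finset.univ g (fun x => Zc k (c * g x))]
  refine Finset.sum_congr rfl fun w _ => ?_
  rw [Finset.sum_congr rfl (fun x hx => by
    rw [(Finset.mem_filter.mp hx).2])]
  rw [Finset.sum_const, nsmul_eq_mul]

lemma balanced_iff (hF : Fintype.card F = 2 ^ n) (g : F → ZMod (2 ^ k)) :
    IsBalancedFn n k g ↔
      ∀ c : ZMod (2 ^ k), c ≠ 0 → ∑ x : F, Zc k (c * g x) = 0 := by
  haveI := NeZero_pow k
  constructor
  · intro hb c hc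
    have h1 : ((2:ℂ) ^ k) * ∑ x : F, Zc k (c * g x) = 0 := by
      rw [sum_Zc_fiberwise, Finset.mul_sum]
      have : ∀ w : ZMod (2 ^ k),
          (2:ℂ) ^ k * (((Finset.univ.filter fun y : F => g y = w).card : ℂ) * Zc k (c * w))
          = (2:ℂ) ^ n * Zc k (w * c) := by
        intro w
        rw [← mul_assoc, mul_comm c w]
        congr 1
        exact_mod_cast hb w
      rw [Finset.sum_congr rfl fun w _ => this w, ← Finset.mul_sum,
        zmod_char_sum k hc, mul_zero]
    have h2k : ((2:ℂ) ^ k) ≠ 0 := pow_ne_zero _ two_ne_zero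
    exact (mul_eq_zero.mp h1).resolve_left h2k
  · intro hs w
    have key : ∑ x : F, ∑ c : ZMod (2 ^ k), Zc k (c * (g x - w))
        = (2:ℂ) ^ k * ((Finset.univ.filter fun y : F => g y = w).card : ℂ) := by
      rw [Finset.sum_congr rfl fun x _ => zmod_char_sum_ite (g x - w)]
      simp only [sub_eq_zero]
      rw [Finset.sum_ite, Finset.sum_const_zero, add_zero, Finset.sum_const,
        nsmul_eq_mul]
      ring
    have key2 : ∑ x : F, ∑ c : ZMod (2 ^ k), Zc k (c * (g x - w))
        = (2:ℂ) ^ n := by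
      rw [Finset.sum_comm]
      have hterm : ∀ c : ZMod (2 ^ k), ∑ x : F, Zc k (c * (g x - w))
          = Zc k (-(c * w)) * ∑ x : F, Zc k (c * g x) := by
        intro c
        rw [Finset.mul_sum]
        refine Finset.sum_congr rfl fun x _ => ?_
        rw [mul_sub, sub_eq_add_neg, Zc_add, mul_comm]
      rw [Finset.sum_congr rfl fun c _ => hterm c]
      rw [Finset.sum_eq_single 0]
      · rw [zero_mul, neg_zero, Zc_zero, one_mul]
        simp only [zero_mul, Zc_zero]
        rw [Finset.sum_const, Finset.card_univ, hF, nsmul_eq_mul, mul_one]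
        push_cast; ring
      · intro c _ hc
        rw [hs c hc, mul_zero]
      · intro h; exact absurd (Finset.mem_univ 0) h
    have := key.symm.trans key2
    have hcast : ((2 ^ k * (Finset.univ.filter fun y : F => g y = w).card : ℕ) : ℂ)
        = ((2 ^ n : ℕ) : ℂ) := by push_cast; linear_combination this
    exact_mod_cast hcast
end AuxD

section AuxE
variable {F : Type} [Field F] [Fintype F] [DecidableEq F] {n : ℕ}
  (hF : Fintype.card F = 2 ^ n)



include hF

omit [Fintype F] [DecidableEq F] hF in
/-- cross term: ∑_{i<j} (a_i b_j + a_j b_i) = (∑a)(∑b) + ∑ a_i b_i  (char 2) -/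
lemma cross_sum (h2 : CharP F 2) (a b : ℕ → F) (m : ℕ) :
    ∑ j ∈ Finset.range m, ∑ i ∈ Finset.range j, (a i * b j + a j * b i)
      = (∑ i ∈ Finset.range m, a i) * (∑ i ∈ Finset.range m, b i)
        + ∑ i ∈ Finset.range m, a i * b i := by
  haveI := h2
  induction m with
  | zero => simp
  | succ m ih =>
    rw [Finset.sum_range_succ, ih, Finset.sum_range_succ a, Finset.sum_range_succ b,
      Finset.sum_range_succ (fun i => a i * b i)]
    have expand : ∑ i ∈ Finset.range m, (a i * b m + a m * b i)
        = (∑ i ∈ Finset.range m, a i) * b m + a m * ∑ i ∈ Finset.range m, b i := by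
      rw [Finset.sum_add_distrib, ← Finset.sum_mul, ← Finset.mul_sum]
    rw [expand]
    have h22 : (a m * b m) + (a m * b m) = 0 := CharTwo.add_self_eq_zero _
    linear_combination -h22

/-- σ(c, x+z) = σ(c,x) + σ(c,z) + Tr(cx)Tr(cz) + Tr(c²xz)  (char 2) -/
lemma sig_add (c x z : F) :
    sig n c (x + z) = sig n c x + sig n c z
      + Tr n (c * x) * Tr n (c * z) + Tr n (c * c * (x * z)) := by
  haveI h2 := charF hF
  haveI : Fact (Nat.Prime 2) := ⟨Nat.prime_two⟩
  set a : ℕ → F := fun i => (c * x) ^ (2 ^ i) with ha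
  set b : ℕ → F := fun i => (c * z) ^ (2 ^ i) with hb
  have hab : ∀ i : ℕ, (c * (x + z)) ^ (2 ^ i) = a i + b i := by
    intro i
    rw [mul_add, add_pow_char_pow]
  have hterm : ∀ j i : ℕ,
      (c * (x+z)) ^ (2^i) * (c * (x+z)) ^ (2^j)
      = a i * a j + b i * b j + (a i * b j + a j * b i) := by
    intro j i
    rw [hab, hab]
    ring
  have hs : sig n c (x + z)
      = sig n c x + sig n c z
        + ∑ j ∈ Finset.range n, ∑ i ∈ Finset.range j, (a i * b j + a j * b i) := by
    rw [sig, sig, sig]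
    rw [Finset.sum_congr rfl fun j _ => Finset.sum_congr rfl fun i _ => hterm j i]
    rw [← Finset.sum_add_distrib, ← Finset.sum_add_distrib]
    refine Finset.sum_congr rfl fun j _ => ?_
    rw [← Finset.sum_add_distrib, ← Finset.sum_add_distrib]
  rw [hs, cross_sum h2 a b n]
  have htr1 : ∑ i ∈ Finset.range n, a i = Tr n (c * x) := rfl
  have htr2 : ∑ i ∈ Finset.range n, b i = Tr n (c * z) := rfl
  have htr3 : ∑ i ∈ Finset.range n, a i * b i = Tr n (c * c * (x * z)) := by
    refine Finset.sum_congr rfl fun i _ => ?_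
    rw [ha, hb, ← mul_pow]
    ring_nf
  rw [htr1, htr2, htr3]
  ring

omit hF in
lemma sig_zero_left (x : F) : sig n 0 x = 0 := by
  simp [sig, zero_pow (pow_ne_zero _ (two_ne_zero))]

omit hF in
lemma sig_zero_right (c : F) : sig n c 0 = 0 := by
  simp [sig, zero_pow (pow_ne_zero _ (two_ne_zero))]

/-- σ takes values in {0,1}. -/
lemma sig_mem (c x : F) : sig n c x = 0 ∨ sig n c x = 1 := by
  haveI h2 := charF hF
  haveI : Fact (Nat.Prime 2) := ⟨Nat.prime_two⟩
  set y : F := c * x with hy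
  set f : ℕ → F := fun i => y ^ (2 ^ i) with hf
  have hfn : f n = f 0 := by
    rw [hf]; simp only [pow_zero, pow_one]
    exact pow_card_self hF y
  set g : ℕ → F := fun j => ∑ i ∈ Finset.range j, f i * f j with hg
  have hsig : sig n c x = ∑ j ∈ Finset.range n, g j := rfl
  have hgn : g n = f 0 * ∑ i ∈ Finset.range n, f i := by
    rw [hg]
    simp only
    rw [show (∑ i ∈ Finset.range n, f i * f n) = ∑ i ∈ Finset.range n, f i * f 0 from
      Finset.sum_congr rfl fun i _ => by rw [hfn]]
    rw [← Finset.sum_mul, mul_comm]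
  have hsq : (∑ j ∈ Finset.range n, g j) ^ 2 = ∑ j ∈ Finset.range n, g j := by
    have h1 : (∑ j ∈ Finset.range n, g j) ^ 2
        = ∑ j ∈ Finset.range n, ∑ i ∈ Finset.range j, f (i+1) * f (j+1) := by
      rw [sum_pow_char]
      refine Finset.sum_congr rfl fun j _ => ?_
      rw [hg]
      simp only
      rw [sum_pow_char]
      refine Finset.sum_congr rfl fun i _ => ?_
      rw [mul_pow, hf]
      simp only
      rw [← pow_mul, ← pow_mul, ← pow_succ, ← pow_succ]
    have hinner : ∀ j : ℕ, ∑ i ∈ Finset.range j, f (i+1) * f (j+1)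
        = g (j+1) + f 0 * f (j+1) := by
      intro j
      have e := Finset.sum_range_succ' (fun i => f i * f (j+1)) j
      have hc := CharTwo.add_self_eq_zero (f 0 * f (j+1))
      rw [hg]
      simp only
      linear_combination -e - hc
    have h2' : (∑ j ∈ Finset.range n, g j) ^ 2
        = (∑ j ∈ Finset.range n, g (j+1)) + f 0 * ∑ j ∈ Finset.range n, f (j+1) := by
      rw [h1, Finset.sum_congr rfl fun j _ => hinner j, Finset.sum_add_distrib,
        Finset.mul_sum]
    have houter : ∑ j ∈ Finset.range n, g (j+1)
        = ∑ j ∈ Finset.range n, g j + g n + g 0 := by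
      have e1 := Finset.sum_range_succ' g n
      have e2 := Finset.sum_range_succ g n
      have hc := CharTwo.add_self_eq_zero (g 0)
      linear_combination e2 - e1 - hc
    have hg0 : g 0 = 0 := by rw [hg]; simp
    have hshift : ∑ j ∈ Finset.range n, f (j+1) = ∑ i ∈ Finset.range n, f i := by
      have e1 := Finset.sum_range_succ' f n
      have e2 := Finset.sum_range_succ f n
      rw [hfn] at e2
      exact add_right_cancel (e1.symm.trans e2)
    rw [h2', houter, hg0, hgn, hshift]
    have hc := CharTwo.add_self_eq_zero (f 0 * ∑ i ∈ Finset.range n, f i)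
    linear_combination hc
  rw [hsig]
  set S := ∑ j ∈ Finset.range n, g j
  rcases mul_eq_zero.mp (show S * (S - 1) = 0 by linear_combination hsq) with h | h
  · exact Or.inl h
  · exact Or.inr (sub_eq_zero.mp h)

end AuxE


section AuxF
variable {F : Type} [Field F] [Fintype F] [DecidableEq F] {n k : ℕ}
  (hF : Fintype.card F = 2 ^ n)

lemma iotaN_zero : iotaN (0 : F) = 0 := by simp [iotaN]
lemma iotaN_one : iotaN (1 : F) = 1 := by simp [iotaN]
lemma iotaZ_zero : iotaZ k (0 : F) = 0 := by simp [iotaZ]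
lemma iotaZ_one : iotaZ k (1 : F) = 1 := by simp [iotaZ]

include hF

lemma mem_add {e e' : F} (he : e = 0 ∨ e = 1) (he' : e' = 0 ∨ e' = 1) :
    e + e' = 0 ∨ e + e' = 1 := by
  rcases he with rfl | rfl <;> rcases he' with rfl | rfl <;>
    simp [F_add_self hF (1:F)]

lemma mem_mul {e e' : F} (he : e = 0 ∨ e = 1) (he' : e' = 0 ∨ e' = 1) :
    e * e' = 0 ∨ e * e' = 1 := by
  rcases he with rfl | rfl <;> rcases he' with rfl | rfl <;> simp

lemma eps_add {e e' : F} (he : e = 0 ∨ e = 1) (he' : e' = 0 ∨ e' = 1) :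
    (-1 : ℂ) ^ iotaN (e + e') = (-1 : ℂ) ^ iotaN e * (-1 : ℂ) ^ iotaN e' := by
  rcases he with rfl | rfl <;> rcases he' with rfl | rfl <;>
    simp [iotaN, F_add_self hF (1:F)]

lemma I_step {a b : F} (ha : a = 0 ∨ a = 1) (hb : b = 0 ∨ b = 1) :
    Complex.I ^ iotaN (a + b) * (starRingEnd ℂ) (Complex.I ^ iotaN a)
      = Complex.I ^ iotaN b * (-1 : ℂ) ^ iotaN (a * b) := by
  rcases ha with rfl | rfl <;> rcases hb with rfl | rfl <;>
    simp [iotaN, F_add_self hF (1:F), Complex.conj_I] <;> ring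

lemma eps_sq (e : F) : (-1 : ℂ) ^ iotaN e * (-1 : ℂ) ^ iotaN e = 1 := by
  rw [← pow_add]
  exact Even.neg_one_pow ⟨iotaN e, rfl⟩

omit hF in
lemma czero_mem (c : ZMod (2 ^ k)) : czero (F := F) k c = 0 ∨ czero (F := F) k c = 1 := by
  rw [czero]; split_ifs <;> simp

omit hF in
lemma czero_idem (c : ZMod (2 ^ k)) :
    czero (F := F) k c * czero (F := F) k c = czero (F := F) k c := by
  rw [czero]; split_ifs <;> simp

omit hF in
lemma c_half (hk : 1 ≤ k) (c : ZMod (2 ^ k)) :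
    c * 2 ^ (k - 1) = if c.val % 2 = 1 then (2 : ZMod (2 ^ k)) ^ (k - 1) else 0 := by
  haveI := NeZero_pow k
  have h2k : (2:ℕ) ^ k = 2 ^ (k-1) * 2 := by rw [← pow_succ]; congr 1; omega
  have hc : ((c.val : ℕ) : ZMod (2 ^ k)) = c :=
    ZMod.natCast_val c |>.trans (ZMod.cast_id _ _)
  have hp : (((2:ℕ) ^ (k-1) : ℕ) : ZMod (2 ^ k)) = (2 : ZMod (2 ^ k)) ^ (k-1) := by
    push_cast; ring
  split_ifs with h
  · obtain ⟨m, hm⟩ : ∃ m, c.val = 2 * m + 1 := ⟨c.val / 2, by omega⟩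
    rw [← hc, ← hp, ← Nat.cast_mul,
      show c.val * 2 ^ (k-1) = m * 2 ^ k + 2 ^ (k-1) from by rw [hm, h2k]; ring,
      Nat.cast_add, Nat.cast_mul, ZMod.natCast_self, mul_zero, zero_add]
  · obtain ⟨m, hm⟩ : ∃ m, c.val = 2 * m := ⟨c.val / 2, by omega⟩
    rw [← hc, ← hp, ← Nat.cast_mul,
      show c.val * 2 ^ (k-1) = m * 2 ^ k from by rw [hm, h2k]; ring,
      Nat.cast_mul, ZMod.natCast_self, mul_zero]

lemma bridge (hk : 1 ≤ k) (c : ZMod (2 ^ k)) (w : F) :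
    (-1 : ℂ) ^ iotaN (Tr n (czero k c * w))
      = Zc k (c * (2 ^ (k - 1) * iotaZ k (Tr n w))) := by
  haveI := NeZero_pow k
  rw [show c * (2 ^ (k-1) * iotaZ k (Tr n w)) = (c * 2 ^ (k-1)) * iotaZ k (Tr n w) from by
    ring, c_half hk c, czero]
  split_ifs with h
  · rcases Tr_mem hF w with ht | ht
    · rw [one_mul, ht, iotaZ_zero, mul_zero, Zc_zero, iotaN_zero, pow_zero]
    · rw [one_mul, ht, iotaZ_one, mul_one, iotaN_one, pow_one]
      have hval : ((2 : ZMod (2 ^ k)) ^ (k-1)).val = 2 ^ (k-1) := by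
        have hp : (((2:ℕ) ^ (k-1) : ℕ) : ZMod (2 ^ k)) = (2 : ZMod (2 ^ k)) ^ (k-1) := by
          push_cast; ring
        rw [← hp, ZMod.val_cast_of_lt (Nat.pow_lt_pow_right (by norm_num) (by omega))]
      rw [Zc, hval, zeta_pow_half k hk]
  · rw [zero_mul, Tr_zero, zero_mul, Zc_zero, iotaN_zero, pow_zero]

end AuxF

section AuxG
variable {F : Type} [Field F] [Fintype F] [DecidableEq F] {n k : ℕ}
  (hF : Fintype.card F = 2 ^ n)

/-- The unimodular summand of negaK. -/
def hfun (n k : ℕ) (f : F → ZMod (2 ^ k)) (c : ZMod (2 ^ k)) (x : F) : ℂ :=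
  (-1 : ℂ) ^ iotaN (sig n (czero k c) x) * Zc k (c * f x)
    * Complex.I ^ iotaN (Tr n (czero k c * x))

lemma negaK_eq (f : F → ZMod (2 ^ k)) (c : ZMod (2 ^ k)) (u : F) :
    negaK n k f c u = ∑ x : F, (-1 : ℂ) ^ iotaN (Tr n (u * x)) * hfun n k f c x := by
  refine Finset.sum_congr rfl fun x _ => ?_
  rw [hfun, Zc, pow_add]
  ring

include hF

/-- The key pointwise identity. -/
lemma hstep (hk : 1 ≤ k) (f : F → ZMod (2 ^ k)) (c : ZMod (2 ^ k)) (z x : F) :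
    hfun n k f c (x + z) * (starRingEnd ℂ) (hfun n k f c x)
      = ((-1 : ℂ) ^ iotaN (sig n (czero k c) z)
          * Complex.I ^ iotaN (Tr n (czero k c * z)))
        * Zc k (c * (f (x + z) - f x + 2 ^ (k - 1) * iotaZ k (Tr n (z * x)))) := by
  set c₀ : F := czero k c with hc0def
  have hc0 : c₀ = 0 ∨ c₀ = 1 := czero_mem c
  have hamem := Tr_mem hF (c₀ * x)
  have hbmem := Tr_mem hF (c₀ * z)
  have hsx := sig_mem hF c₀ x
  have hsz := sig_mem hF c₀ z
  have htmem := Tr_mem hF (c₀ * (z * x))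
  -- decompositions
  have hTr : Tr n (c₀ * (x + z)) = Tr n (c₀ * x) + Tr n (c₀ * z) := by
    rw [mul_add, Tr_add hF]
  have h1 : sig n c₀ (x + z)
      = sig n c₀ x + (sig n c₀ z + (Tr n (c₀ * x) * Tr n (c₀ * z) + Tr n (c₀ * (z * x)))) := by
    rw [sig_add hF c₀ x z, hc0def, czero_idem]
    rw [show (x * z) = z * x from mul_comm x z]
    ring
  -- expand conj
  have hconj : (starRingEnd ℂ) (hfun n k f c x)
      = (-1 : ℂ) ^ iotaN (sig n c₀ x) * Zc k (-(c * f x))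
        * (starRingEnd ℂ) (Complex.I ^ iotaN (Tr n (c₀ * x))) := by
    rw [hfun, map_mul, map_mul, map_pow, map_neg, map_one, Zc_conj, hc0def]
  rw [hfun, hconj, h1, hTr]
  -- abbreviate atoms
  have hE : (-1 : ℂ) ^ iotaN (sig n c₀ x + (sig n c₀ z + (Tr n (c₀ * x) * Tr n (c₀ * z)
        + Tr n (c₀ * (z * x)))))
      = (-1 : ℂ) ^ iotaN (sig n c₀ x) * ((-1 : ℂ) ^ iotaN (sig n c₀ z)
        * ((-1 : ℂ) ^ iotaN (Tr n (c₀ * x) * Tr n (c₀ * z))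
        * (-1 : ℂ) ^ iotaN (Tr n (c₀ * (z * x))))) := by
    rw [eps_add hF hsx (mem_add hF hsz (mem_add hF (mem_mul hF hamem hbmem) htmem)),
      eps_add hF hsz (mem_add hF (mem_mul hF hamem hbmem) htmem),
      eps_add hF (mem_mul hF hamem hbmem) htmem]
  have hI := I_step hF hamem hbmem
  have hbr : (-1 : ℂ) ^ iotaN (Tr n (c₀ * (z * x)))
      = Zc k (c * (2 ^ (k - 1) * iotaZ k (Tr n (z * x)))) := by
    rw [hc0def]; exact bridge hF hk c (z * x)
  have hZ : Zc k (c * f (x + z)) * Zc k (-(c * f x))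
        * Zc k (c * (2 ^ (k - 1) * iotaZ k (Tr n (z * x))))
      = Zc k (c * (f (x + z) - f x + 2 ^ (k - 1) * iotaZ k (Tr n (z * x)))) := by
    rw [← Zc_add, ← Zc_add]
    congr 1
    ring
  rw [hE, hbr]
  set Ex := (-1 : ℂ) ^ iotaN (sig n c₀ x)
  set Ez := (-1 : ℂ) ^ iotaN (sig n c₀ z)
  set Eab := (-1 : ℂ) ^ iotaN (Tr n (c₀ * x) * Tr n (c₀ * z))
  set Z1 := Zc k (c * f (x + z))
  set Z2 := Zc k (-(c * f x))
  set Z3 := Zc k (c * (2 ^ (k - 1) * iotaZ k (Tr n (z * x))))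
  set Iab := Complex.I ^ iotaN (Tr n (c₀ * x) + Tr n (c₀ * z))
  set Ia := (starRingEnd ℂ) (Complex.I ^ iotaN (Tr n (c₀ * x)))
  set Ib := Complex.I ^ iotaN (Tr n (c₀ * z))
  calc Ex * (Ez * (Eab * Z3)) * Z1 * Iab * (Ex * Z2 * Ia)
      = (Ex * Ex) * (Ez * (Z1 * Z2 * Z3) * Eab * (Iab * Ia)) := by ring
    _ = (Ex * Ex) * (Ez * (Z1 * Z2 * Z3) * Eab * (Ib * Eab)) := by rw [hI]
    _ = (Ex * Ex) * ((Eab * Eab) * (Ez * Ib * (Z1 * Z2 * Z3))) := by ring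
    _ = Ez * Ib * (Z1 * Z2 * Z3) := by rw [eps_sq hF, eps_sq hF, one_mul, one_mul]
    _ = Ez * Ib * Zc k (c * (f (x + z) - f x + 2 ^ (k - 1) * iotaZ k (Tr n (z * x)))) := by
        rw [← hZ]
  -- done? goal shape: Ez * Ib * Zc ... vs (Ez * Ib) * Zc ..., `ring`-closed by calc end

end AuxG

section AuxH
variable {F : Type} [Field F] [Fintype F] [DecidableEq F] {n k : ℕ}
  (hF : Fintype.card F = 2 ^ n)

include hF

lemma C_eq (hk : 1 ≤ k) (f : F → ZMod (2 ^ k)) (c : ZMod (2 ^ k)) (z : F) :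
    ∑ x : F, hfun n k f c (x + z) * (starRingEnd ℂ) (hfun n k f c x)
      = ((-1 : ℂ) ^ iotaN (sig n (czero k c) z)
          * Complex.I ^ iotaN (Tr n (czero k c * z)))
        * ∑ x : F, Zc k (c * (f (x + z) - f x + 2 ^ (k - 1) * iotaZ k (Tr n (z * x)))) := by
  rw [Finset.mul_sum]
  exact Finset.sum_congr rfl fun x _ => hstep hF hk f c z x

lemma char_sum_F_ite (hn : 1 ≤ n) (w : F) :
    ∑ u : F, (-1 : ℂ) ^ iotaN (Tr n (u * w)) = if w = 0 then (2 : ℂ) ^ n else 0 := by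
  split_ifs with h
  · subst h
    simp only [mul_zero, Tr_zero, iotaN_zero, pow_zero]
    rw [Finset.sum_const, Finset.card_univ, hF, nsmul_eq_mul, mul_one]
    push_cast; ring
  · exact char_sum_F hF hn h

lemma parseval (f : F → ZMod (2 ^ k)) (c : ZMod (2 ^ k)) (u : F) :
    negaK n k f c u * (starRingEnd ℂ) (negaK n k f c u)
      = ∑ z : F, (-1 : ℂ) ^ iotaN (Tr n (u * z))
          * ∑ x : F, hfun n k f c (x + z) * (starRingEnd ℂ) (hfun n k f c x) := by
  have hK2 : (starRingEnd ℂ) (negaK n k f c u)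
      = ∑ y : F, (-1 : ℂ) ^ iotaN (Tr n (u * y)) * (starRingEnd ℂ) (hfun n k f c y) := by
    rw [negaK_eq, map_sum]
    refine Finset.sum_congr rfl fun y _ => ?_
    rw [map_mul, map_pow, map_neg, map_one]
  rw [hK2, negaK_eq, Finset.sum_mul_sum]
  have inner : ∀ y : F,
      ∑ z : F, (-1 : ℂ) ^ iotaN (Tr n (u * z))
          * (hfun n k f c (y + z) * (starRingEnd ℂ) (hfun n k f c y))
      = ∑ x : F, ((-1 : ℂ) ^ iotaN (Tr n (u * x)) * hfun n k f c x)
          * ((-1 : ℂ) ^ iotaN (Tr n (u * y)) * (starRingEnd ℂ) (hfun n k f c y)) := by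
    intro y
    refine (Fintype.sum_equiv (Equiv.addLeft y) _ _ ?_).symm
    intro x
    have hyx : y + (y + x) = x := by
      rw [← add_assoc, F_add_self hF y, zero_add]
    have htr : Tr n (u * (y + x)) = Tr n (u * y) + Tr n (u * x) := by
      rw [mul_add, Tr_add hF]
    show ((-1 : ℂ) ^ iotaN (Tr n (u * x)) * hfun n k f c x)
          * ((-1 : ℂ) ^ iotaN (Tr n (u * y)) * (starRingEnd ℂ) (hfun n k f c y))
        = (-1 : ℂ) ^ iotaN (Tr n (u * (y + x)))
          * (hfun n k f c (y + (y + x)) * (starRingEnd ℂ) (hfun n k f c y))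
    rw [hyx, htr, eps_add hF (Tr_mem hF _) (Tr_mem hF _)]
    ring
  calc ∑ x : F, ∑ y : F, ((-1 : ℂ) ^ iotaN (Tr n (u * x)) * hfun n k f c x)
          * ((-1 : ℂ) ^ iotaN (Tr n (u * y)) * (starRingEnd ℂ) (hfun n k f c y))
      = ∑ y : F, ∑ x : F, ((-1 : ℂ) ^ iotaN (Tr n (u * x)) * hfun n k f c x)
          * ((-1 : ℂ) ^ iotaN (Tr n (u * y)) * (starRingEnd ℂ) (hfun n k f c y)) :=
        Finset.sum_comm
    _ = ∑ y : F, ∑ z : F, (-1 : ℂ) ^ iotaN (Tr n (u * z))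
          * (hfun n k f c (y + z) * (starRingEnd ℂ) (hfun n k f c y)) :=
        Finset.sum_congr rfl fun y _ => (inner y).symm
    _ = ∑ z : F, ∑ y : F, (-1 : ℂ) ^ iotaN (Tr n (u * z))
          * (hfun n k f c (y + z) * (starRingEnd ℂ) (hfun n k f c y)) := Finset.sum_comm
    _ = ∑ z : F, (-1 : ℂ) ^ iotaN (Tr n (u * z))
          * ∑ x : F, hfun n k f c (x + z) * (starRingEnd ℂ) (hfun n k f c x) := by
        refine Finset.sum_congr rfl fun z _ => ?_
        rw [Finset.mul_sum]

lemma C_zero_val (hk : 1 ≤ k) (f : F → ZMod (2 ^ k)) (c : ZMod (2 ^ k)) :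
    ∑ x : F, hfun n k f c (x + 0) * (starRingEnd ℂ) (hfun n k f c x) = (2 : ℂ) ^ n := by
  rw [C_eq hF hk f c 0]
  have hP : ((-1 : ℂ) ^ iotaN (sig n (czero (F := F) k c) 0)
      * Complex.I ^ iotaN (Tr n (czero (F := F) k c * 0))) = 1 := by
    rw [sig_zero_right, mul_zero, Tr_zero, iotaN_zero, pow_zero, pow_zero, one_mul]
  have hS : ∀ x : F, Zc k (c * (f (x + 0) - f x + 2 ^ (k - 1) * iotaZ k (Tr n (0 * x)))) = 1 := by
    intro x
    rw [add_zero, sub_self, zero_mul, Tr_zero, iotaZ_zero, mul_zero, zero_add, mul_zero,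
      Zc_zero]
  rw [hP, one_mul, Finset.sum_congr rfl fun x _ => hS x, Finset.sum_const,
    Finset.card_univ, hF, nsmul_eq_mul, mul_one]
  push_cast; ring

end AuxH

/-- f is nega-ℤ_{2^k}-bent iff for every nonzero z the function
y ↦ f(y+z) − f(y) + 2^{k−1}·ι(Tr(zy)) is balanced. -/
theorem stmt6 {F : Type} [Field F] [Fintype F] [DecidableEq F] (n k : ℕ)
    (hn : 1 ≤ n) (hk : 1 ≤ k) (hF : Fintype.card F = 2 ^ n)
    (f : F → ZMod (2 ^ k)) :
    (∀ u : F, ∀ c : ZMod (2 ^ k), c ≠ 0 →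
        ‖negaK n k f c u‖ = Real.sqrt (2 ^ n)) ↔
      (∀ z : F, z ≠ 0 →
        IsBalancedFn n k (fun y => f (y + z) - f y +
          2 ^ (k - 1) * iotaZ k (Tr n (z * y)))) := by
  have h2npos : (0:ℝ) ≤ (2:ℝ) ^ n := by positivity
  have h2nC : ((2:ℂ)) ^ n ≠ 0 := pow_ne_zero _ two_ne_zero
  constructor
  · intro hbent z hz
    rw [balanced_iff hF]
    intro c hc
    have hKK : ∀ u : F, negaK n k f c u * (starRingEnd ℂ) (negaK n k f c u)
        = (2:ℂ) ^ n := by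
      intro u
      rw [Complex.mul_conj]
      have h2 : Complex.normSq (negaK n k f c u) = (2:ℝ) ^ n := by
        rw [← Complex.sq_norm, hbent u c hc, Real.sq_sqrt (by positivity)]
      rw [h2]
      push_cast; ring
    have hinv : (2:ℂ) ^ n
        * (∑ x : F, hfun n k f c (x + z) * (starRingEnd ℂ) (hfun n k f c x)) = 0 := by
      have e1 : ∑ u : F, (-1:ℂ) ^ iotaN (Tr n (u * z))
          * (negaK n k f c u * (starRingEnd ℂ) (negaK n k f c u)) = 0 := by
        rw [Finset.sum_congr rfl fun u _ => by rw [hKK u]]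
        rw [← Finset.sum_mul, char_sum_F hF hn hz, zero_mul]
      have e2 : ∑ u : F, (-1:ℂ) ^ iotaN (Tr n (u * z))
            * (negaK n k f c u * (starRingEnd ℂ) (negaK n k f c u))
          = (2:ℂ) ^ n
            * (∑ x : F, hfun n k f c (x + z) * (starRingEnd ℂ) (hfun n k f c x)) := by
        have merge : ∀ u z' : F, (-1:ℂ) ^ iotaN (Tr n (u * z)) * (-1:ℂ) ^ iotaN (Tr n (u * z'))
            = (-1:ℂ) ^ iotaN (Tr n (u * (z + z'))) := by
          intro u z'
          rw [mul_add, Tr_add hF, eps_add hF (Tr_mem hF _) (Tr_mem hF _)]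
        calc ∑ u : F, (-1:ℂ) ^ iotaN (Tr n (u * z))
              * (negaK n k f c u * (starRingEnd ℂ) (negaK n k f c u))
            = ∑ u : F, ∑ z' : F, (-1:ℂ) ^ iotaN (Tr n (u * (z + z')))
              * ∑ x : F, hfun n k f c (x + z') * (starRingEnd ℂ) (hfun n k f c x) := by
              refine Finset.sum_congr rfl fun u _ => ?_
              rw [parseval hF f c u, Finset.mul_sum]
              refine Finset.sum_congr rfl fun z' _ => ?_
              rw [← mul_assoc, merge u z']
          _ = ∑ z' : F, ∑ u : F, (-1:ℂ) ^ iotaN (Tr n (u * (z + z')))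
              * ∑ x : F, hfun n k f c (x + z') * (starRingEnd ℂ) (hfun n k f c x) :=
              Finset.sum_comm
          _ = ∑ z' : F, (if z + z' = 0 then (2:ℂ)^n else 0)
              * ∑ x : F, hfun n k f c (x + z') * (starRingEnd ℂ) (hfun n k f c x) := by
              refine Finset.sum_congr rfl fun z' _ => ?_
              rw [← Finset.sum_mul, char_sum_F_ite hF hn (z + z')]
          _ = (2:ℂ) ^ n
              * (∑ x : F, hfun n k f c (x + z) * (starRingEnd ℂ) (hfun n k f c x)) := by
              rw [Finset.sum_eq_single z]
              · rw [if_pos (F_add_self hF z)]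
              · intro z' _ hne
                rw [if_neg, zero_mul]
                intro h0
                have hzz : z = z' := by
                  have hself := F_add_self hF z'
                  linear_combination h0 - hself
                exact hne hzz.symm
              · intro h; exact absurd (Finset.mem_univ z) h
      rw [← e2, e1]
    have hCz : ∑ x : F, hfun n k f c (x + z) * (starRingEnd ℂ) (hfun n k f c x) = 0 :=
      (mul_eq_zero.mp hinv).resolve_left h2nC
    rw [C_eq hF hk f c z] at hCz
    have hPne : ((-1 : ℂ) ^ iotaN (sig n (czero (F := F) k c) z)
        * Complex.I ^ iotaN (Tr n (czero (F := F) k c * z))) ≠ 0 :=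
      mul_ne_zero (pow_ne_zero _ (neg_ne_zero.mpr one_ne_zero))
        (pow_ne_zero _ Complex.I_ne_zero)
    exact (mul_eq_zero.mp hCz).resolve_left hPne
  · intro hbal u c hc
    have hC : ∀ z : F, z ≠ 0 →
        ∑ x : F, hfun n k f c (x + z) * (starRingEnd ℂ) (hfun n k f c x) = 0 := by
      intro z hz
      rw [C_eq hF hk f c z]
      have hs := (balanced_iff hF _).mp (hbal z hz) c hc
      rw [show (∑ x : F, Zc k (c * (f (x + z) - f x
          + 2 ^ (k - 1) * iotaZ k (Tr n (z * x))))) = 0 from hs, mul_zero]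
    have hKK : negaK n k f c u * (starRingEnd ℂ) (negaK n k f c u) = (2:ℂ) ^ n := by
      rw [parseval hF f c u, Finset.sum_eq_single 0]
      · rw [mul_zero, Tr_zero, iotaN_zero, pow_zero, one_mul, C_zero_val hF hk f c]
      · intro z _ hz
        rw [hC z hz, mul_zero]
      · intro h; exact absurd (Finset.mem_univ 0) h
    have hnorm : Complex.normSq (negaK n k f c u) = (2:ℝ) ^ n := by
      have : ((Complex.normSq (negaK n k f c u) : ℝ) : ℂ) = ((2:ℝ)^n : ℂ) := by
        rw [← Complex.mul_conj, hKK]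
        push_cast; ring
      exact_mod_cast this
    rw [Complex.norm_def, hnorm]
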